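/- Converse computation for the optimality of the rate-memory triple (R̃¹, M̃_w¹, M̃_s¹) (Corollary after Theorem 4): Let K_w, K_s be positive integers, K = K_w + K_s, and δ_s, δ_w, δ_z reals with 0 ≤ δ_s ≤ δ_w < 1 and 0 ≤ δ_z ≤ 1. Set denom := K_w(1 − δ_s) + K_s(1 − δ_w), R̃¹ := (1 − δ_s)(1 − δ_w)/denom, M̃_w¹ := (1 − δ_s)·min{1 − δ_z, 1 − δ_w}/denom, and M̃_s¹ := (1 − δ_w)·min{1 − δ_z, 1 − δ_s}/denom. Then sup_{β ∈ [0,1]} min{ β(δ_z − δ_w)⁺/K_w + M̃_w¹ , (β(δ_z − δ_w)⁺ + (1 − β)(δ_z − δ_s)⁺)/K + (K_w·M̃_w¹ + K_s·M̃_s¹)/K } = R̃¹. -/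

import Mathlib

/-- Converse computation for the optimality of the rate-memory triple
(R̃¹, M̃_w¹, M̃_s¹): the paper's upper bound (19) with k_w = K_w, k_s = K_s evaluated at
cache sizes (M̃_w¹, M̃_s¹) equals R̃¹. -/
theorem stmt_2 (Kw Ks K : ℕ) (hKw : 0 < Kw) (hKs : 0 < Ks) (hK : K = Kw + Ks)
    (δs δw δz : ℝ) (hs0 : 0 ≤ δs) (hsw : δs ≤ δw) (hw1 : δw < 1)
    (hz0 : 0 ≤ δz) (hz1 : δz ≤ 1)
    (denom R1 Mw1 Ms1 : ℝ)
    (hdenom : denom = Kw * (1 - δs) + Ks * (1 - δw))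
    (hR1 : R1 = (1 - δs) * (1 - δw) / denom)
    (hMw1 : Mw1 = (1 - δs) * min (1 - δz) (1 - δw) / denom)
    (hMs1 : Ms1 = (1 - δw) * min (1 - δz) (1 - δs) / denom) :
    sSup ((fun β : ℝ => min (β * max (δz - δw) 0 / Kw + Mw1)
        ((β * max (δz - δw) 0 + (1 - β) * max (δz - δs) 0) / K
          + (Kw * Mw1 + Ks * Ms1) / K)) '' Set.Icc 0 1)
      = R1 := by
  set A := max (δz - δw) 0 with hA
  set B := max (δz - δs) 0 with hB
  have hA0 : 0 ≤ A := le_max_right _ _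
  have hAB : A ≤ B := max_le_max (by linarith) le_rfl
  have hKwR : (0:ℝ) < Kw := by exact_mod_cast hKw
  have hKsR : (0:ℝ) < Ks := by exact_mod_cast hKs
  have hKR : (K:ℝ) = Kw + Ks := by rw [hK]; push_cast; ring
  have hKpos : (0:ℝ) < K := by rw [hKR]; linarith
  have hs1 : δs < 1 := lt_of_le_of_lt hsw hw1
  have hdpos : 0 < denom := by
    rw [hdenom]
    nlinarith [mul_pos hKwR (by linarith : (0:ℝ) < 1 - δs), mul_pos hKsR (by linarith : (0:ℝ) < 1 - δw)]
  -- rewrite the mins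
  have hmw : min (1 - δz) (1 - δw) = (1 - δw) - A := by
    rcases le_total δz δw with h | h
    · rw [hA, max_eq_right (by linarith), min_eq_right (by linarith)]; ring
    · rw [hA, max_eq_left (by linarith), min_eq_left (by linarith)]; ring
  have hms : min (1 - δz) (1 - δs) = (1 - δs) - B := by
    rcases le_total δz δs with h | h
    · rw [hB, max_eq_right (by linarith), min_eq_right (by linarith)]; ring
    · rw [hB, max_eq_left (by linarith), min_eq_left (by linarith)]; ring
  rw [hmw] at hMw1
  rw [hms] at hMs1
  set βs : ℝ := Kw * (1 - δs) / denom with hβs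
  have hβ0 : 0 ≤ βs := by
    rw [hβs]
    have : (0:ℝ) ≤ Kw * (1 - δs) := by nlinarith
    positivity
  have hβ1 : βs ≤ 1 := by
    rw [hβs, div_le_one hdpos, hdenom]
    nlinarith
  have hf : βs * A / Kw + Mw1 = R1 := by
    rw [hβs, hMw1, hR1]
    field_simp
    ring
  have hg : (βs * A + (1 - βs) * B) / K + (Kw * Mw1 + Ks * Ms1) / K = R1 := by
    rw [hβs, hMw1, hMs1, hR1, hKR]
    have h1 : 1 - Kw * (1 - δs) / denom = Ks * (1 - δw) / denom := by
      field_simp; rw [hdenom]; ring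
    rw [h1]
    have hKKs : (0:ℝ) < Kw + Ks := by linarith
    field_simp
    ring
  apply IsGreatest.csSup_eq
  constructor
  · exact ⟨βs, ⟨hβ0, hβ1⟩, by simp only [hf, hg, min_self]⟩
  · rintro x ⟨β, ⟨hb0, hb1⟩, rfl⟩
    rcases le_total β βs with h | h
    · refine le_trans (min_le_left _ _) ?_
      rw [← hf]
      exact add_le_add_left ((div_le_div_iff_of_pos_right hKwR).mpr
        (mul_le_mul_of_nonneg_right h hA0)) Mw1
    · refine le_trans (min_le_right _ _) ?_
      rw [← hg]
      have key : 0 ≤ (β - βs) * (B - A) :=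
        mul_nonneg (by linarith) (by linarith)
      have hnum : β * A + (1 - β) * B ≤ βs * A + (1 - βs) * B := by
        have hid : βs * A + (1 - βs) * B - (β * A + (1 - β) * B)
            = (β - βs) * (B - A) := by ring
        linarith
      exact add_le_add_left ((div_le_div_iff_of_pos_right hKpos).mpr hnum) _
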